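/- arXiv:2409.18490 — 2 statements merged into one kernel-verified Lean document; each statement's English description precedes it below -/
import Mathlib

section
/- Let U_ε ∈ C¹([0,T]; V_N) solve the semi-discrete FSG scheme for the fractional KdV equation. Then d/dt ∫_{−π}^{π} [ε² (D^{α/2} U_ε(x,t))² − 2 U_ε³(x,t)] dx = 0 (conservation of the energy invariant). -/
open scoped BigOperators

/-- L² inner product on [-π,π] expressed via Fourier coefficients (Parseval). -/
noncomputable def innerC (a b : ℤ → ℂ) : ℂ :=
  2 * Real.pi * ∑' k : ℤ, a k * (starRingEnd ℂ) (b k)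

/-- Periodic fractional Laplacian of order `α` as a Fourier multiplier `|k|^α`. -/
noncomputable def Dmul (α : ℝ) (a : ℤ → ℂ) : ℤ → ℂ :=
  fun k => ((((|k| : ℤ) : ℝ) ^ α : ℝ) : ℂ) * a k

/-- Spatial derivative as a Fourier multiplier `i k`. -/
noncomputable def Dx (a : ℤ → ℂ) : ℤ → ℂ := fun k => Complex.I * (k : ℂ) * a k

/-- Fourier coefficients of a product: discrete convolution. -/
noncomputable def convC (a b : ℤ → ℂ) : ℤ → ℂ := fun m => ∑' k : ℤ, a k * b (m - k)

/-- Fourier truncation to modes `|k| ≤ N`. -/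
def PN (N : ℕ) (a : ℤ → ℂ) : ℤ → ℂ := fun k => if |k| ≤ (N : ℤ) then a k else 0

/-- Membership in the space `V_N` of trigonometric polynomials of degree `N`. -/
def inVN (N : ℕ) (a : ℤ → ℂ) : Prop := ∀ k : ℤ, (N : ℤ) < |k| → a k = 0

/-- Square of the periodic Sobolev `H^r` norm. -/
noncomputable def sobSq (r : ℝ) (a : ℤ → ℂ) : ℝ :=
  ∑' k : ℤ, (1 + ((|k| : ℤ) : ℝ) ^ 2) ^ r * ‖a k‖ ^ 2

/-- Membership in the periodic Sobolev space `H^r_p`. -/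
def MemHr (r : ℝ) (a : ℤ → ℂ) : Prop :=
  Summable fun k : ℤ => (1 + ((|k| : ℤ) : ℝ) ^ 2) ^ r * ‖a k‖ ^ 2

/-- The `L²` norm on `[-π,π]` via Parseval. -/
noncomputable def normL2 (a : ℤ → ℂ) : ℝ :=
  Real.sqrt (2 * Real.pi * ∑' k : ℤ, ‖a k‖ ^ 2)

/-- Real-valuedness of the underlying function. -/
def RealCoeffs (a : ℤ → ℂ) : Prop := ∀ k : ℤ, a (-k) = (starRingEnd ℂ) (a k)

noncomputable def SN (N : ℕ) : Finset ℤ := Finset.Icc (-(N:ℤ)) N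

lemma not_mem_SN {N : ℕ} {k : ℤ} (h : k ∉ SN N) : (N : ℤ) < |k| := by
  simp only [SN, Finset.mem_Icc, not_and_or, not_le] at h
  rw [lt_abs]; omega

noncomputable def dco (c : ℝ → ℤ → ℂ) (t : ℝ) (k : ℤ) : ℂ := deriv (fun s => c s k) t

noncomputable def wco (α : ℝ) (k : ℤ) : ℝ := ((|k| : ℤ) : ℝ) ^ α

noncomputable def qco (N : ℕ) (a : ℤ → ℂ) (j : ℤ) : ℂ := ∑ l ∈ SN N, a l * a (j - l)

noncomputable def gco (N : ℕ) (α ε : ℝ) (a : ℤ → ℂ) (j : ℤ) : ℂ :=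
  ((ε ^ 2 * wco α j : ℝ) : ℂ) * a j - 3 * qco N a j

lemma convC_eq_sum {N : ℕ} {a : ℤ → ℂ} (ha : inVN N a) (b : ℤ → ℂ) (m : ℤ) :
    convC a b m = ∑ k ∈ SN N, a k * b (m - k) := by
  refine tsum_eq_sum ?_
  intro k hk
  rw [ha k (not_mem_SN hk), zero_mul]

lemma conv_dx_eq {N : ℕ} {a : ℤ → ℂ} (ha : inVN N a) (j : ℤ) :
    (2 : ℂ) * convC a (Dx a) j = Complex.I * j * qco N a j := by
  have h1 : convC a (Dx a) j = ∑ l ∈ SN N, a l * (Complex.I * ((j - l : ℤ) : ℂ) * a (j - l)) :=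
    convC_eq_sum ha (Dx a) j
  have h2 : convC a (Dx a) j = ∑ l ∈ SN N, a (j - l) * (Complex.I * (l : ℂ) * a l) := by
    have h2' : convC a (Dx a) j = ∑' l, a (j - l) * Dx a (j - (j - l)) := by
      rw [convC]; exact ((Equiv.subLeft j).tsum_eq (fun l => a l * Dx a (j - l))).symm
    rw [h2']
    have h3 : ∀ l : ℤ, a (j - l) * Dx a (j - (j - l)) = a (j - l) * (Complex.I * (l:ℂ) * a l) := by
      intro l
      have : j - (j - l) = l := by ring
      rw [this, Dx]
    rw [tsum_congr h3]
    refine tsum_eq_sum ?_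
    intro l hl
    rw [ha l (not_mem_SN hl), mul_zero, mul_zero]
  have hsum : (2:ℂ) * convC a (Dx a) j
      = ∑ l ∈ SN N, (a l * (Complex.I * ((j - l : ℤ) : ℂ) * a (j - l))
          + a (j - l) * (Complex.I * (l : ℂ) * a l)) := by
    rw [Finset.sum_add_distrib, ← h1, ← h2]; ring
  rw [hsum, qco, Finset.mul_sum]
  refine Finset.sum_congr rfl ?_
  intro l _
  push_cast
  ring

lemma qco_neg {N : ℕ} {a : ℤ → ℂ} (hr : ∀ k : ℤ, a (-k) = (starRingEnd ℂ) (a k)) (j : ℤ) :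
    (starRingEnd ℂ) (qco N a j) = ∑ k ∈ SN N, a k * a (-j - k) := by
  rw [qco, map_sum]
  rw [← Finset.sum_nbij' (i := fun (l : ℤ) => -l) (j := fun (l : ℤ) => -l)
    (f := fun l => a l * a (-j - l)) (g := fun l => (starRingEnd ℂ) (a l * a (j - l)))]
  · intro l hl
    simp only [SN, Finset.mem_Icc] at hl ⊢; omega
  · intro l hl
    simp only [SN, Finset.mem_Icc] at hl ⊢; omega
  · intro l _; simp
  · intro l _; simp
  · intro l _
    have h1 : (starRingEnd ℂ) (a (-l)) = a l := by rw [← hr (-l), neg_neg]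
    have h2 : (starRingEnd ℂ) (a (j - -l)) = a (-j - l) := by
      rw [← hr (j - -l)]; congr 1; ring
    rw [map_mul, h1, h2]

def eflip : ℤ × ℤ ≃ ℤ × ℤ where
  toFun p := (-p.1 - p.2, p.2)
  invFun p := (-p.1 - p.2, p.2)
  left_inv p := by simp [Prod.ext_iff]
  right_inv p := by simp [Prod.ext_iff]

lemma triple_flip {N : ℕ} {a d : ℤ → ℂ} (ha : ∀ k, k ∉ SN N → a k = 0)
    (hd : ∀ k, k ∉ SN N → d k = 0) :
    ∑ j ∈ SN N, ∑ k ∈ SN N, a j * a k * d (-j - k)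
      = ∑ j ∈ SN N, ∑ k ∈ SN N, d j * a k * a (-j - k) := by
  have h1 : ∑ j ∈ SN N, ∑ k ∈ SN N, a j * a k * d (-j - k)
      = ∑' p : ℤ × ℤ, a p.1 * a p.2 * d (-p.1 - p.2) := by
    rw [show ∑ j ∈ SN N, ∑ k ∈ SN N, a j * a k * d (-j - k)
      = ∑ p ∈ (SN N) ×ˢ (SN N), a p.1 * a p.2 * d (-p.1 - p.2) from
      (Finset.sum_product (s := SN N) (t := SN N) (f := fun p => a p.1 * a p.2 * d (-p.1 - p.2))).symm]
    refine (tsum_eq_sum ?_).symm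
    intro p hp
    rw [Finset.mem_product, not_and_or] at hp
    rcases hp with h | h
    · rw [ha _ h, zero_mul, zero_mul]
    · rw [ha _ h, mul_zero, zero_mul]
  have h2 : ∑ j ∈ SN N, ∑ k ∈ SN N, d j * a k * a (-j - k)
      = ∑' p : ℤ × ℤ, d p.1 * a p.2 * a (-p.1 - p.2) := by
    rw [show ∑ j ∈ SN N, ∑ k ∈ SN N, d j * a k * a (-j - k)
      = ∑ p ∈ (SN N) ×ˢ (SN N), d p.1 * a p.2 * a (-p.1 - p.2) from
      (Finset.sum_product (s := SN N) (t := SN N) (f := fun p => d p.1 * a p.2 * a (-p.1 - p.2))).symm]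
    refine (tsum_eq_sum ?_).symm
    intro p hp
    rw [Finset.mem_product, not_and_or] at hp
    rcases hp with h | h
    · rw [hd _ h, zero_mul, zero_mul]
    · rw [ha _ h, mul_zero, zero_mul]
  rw [h1, h2]
  rw [← eflip.tsum_eq (fun p => d p.1 * a p.2 * a (-p.1 - p.2))]
  refine tsum_congr ?_
  rintro ⟨j, k⟩
  simp only [eflip, Equiv.coe_fn_mk]
  have h3 : -(-j - k) - k = j := by ring
  rw [h3]; ring

lemma pointwise_ode (N : ℕ) (F : ℤ → ℂ)
    (hF : ∀ φ : ℤ → ℂ, inVN N φ → innerC F φ = 0) :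
    ∀ j ∈ SN N, F j = 0 := by
  intro j hj
  classical
  have hδ : inVN N (fun k => if k = j then (1:ℂ) else 0) := by
    intro k hk
    show (if k = j then (1:ℂ) else 0) = 0
    rw [if_neg]
    rintro rfl
    simp only [SN, Finset.mem_Icc] at hj
    rw [lt_abs] at hk; omega
  have h0 := hF _ hδ
  rw [innerC] at h0
  have h1 : ∑' k, F k * (starRingEnd ℂ) (if k = j then (1:ℂ) else 0) = F j := by
    rw [tsum_eq_single j]
    · simp
    · intro k hkj; simp [hkj]
  rw [h1] at h0
  rcases mul_eq_zero.mp h0 with h | h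
  · exfalso
    rcases mul_eq_zero.mp h with h' | h'
    · norm_num at h'
    · rw [Complex.ofReal_eq_zero] at h'
      exact Real.pi_ne_zero h'
  · exact h


/-- Conservation of the energy invariant
`d/dt ∫ [ε² (D^{α/2} U_ε)² − 2 U_ε³] dx = 0` for the semi-discrete FSG scheme,
expressed via Parseval: `∫ (D^{α/2}U)² = 2π Σ |k|^α |ĉ(k)|²` and
`∫ U³ = 2π (ĉ⋆ĉ⋆ĉ)(0)`. -/
theorem stmt11 (N : ℕ) (α ε T : ℝ) (hα1 : 1 ≤ α) (hα2 : α ≤ 2) (hT : 0 < T)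
    (c : ℝ → ℤ → ℂ)
    (hVN : ∀ t, inVN N (c t))
    (hreal : ∀ t, RealCoeffs (c t))
    (hdiff : ∀ (k : ℤ) (t : ℝ), DifferentiableAt ℝ (fun s => c s k) t)
    (hscheme : ∀ t ∈ Set.Icc (0 : ℝ) T, ∀ φ : ℤ → ℂ, inVN N φ →
      innerC (fun k => deriv (fun s => c s k) t + 6 * convC (c t) (Dx (c t)) k
        - ((ε ^ 2 : ℝ) : ℂ) * Dmul α (Dx (c t)) k) φ = 0) :
    ∀ t ∈ Set.Icc (0 : ℝ) T,
      deriv (fun s => 2 * Real.pi *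
        (ε ^ 2 * ∑' k : ℤ, ((|k| : ℤ) : ℝ) ^ α * ‖c s k‖ ^ 2
          - 2 * (convC (c s) (convC (c s) (c s)) 0).re)) t = 0 := by
  intro t ht
  classical
  have hsup : ∀ s : ℝ, ∀ k, k ∉ SN N → c s k = 0 := fun s k hk => hVN s k (not_mem_SN hk)
  have hd0 : ∀ k, k ∉ SN N → dco c t k = 0 := by
    intro k hk
    have hzero : (fun s : ℝ => c s k) = fun _ => (0:ℂ) := funext fun s => hsup s k hk
    rw [dco, hzero]
    exact deriv_const t 0
  -- pointwise ODE
  have hode : ∀ j ∈ SN N, dco c t j = Complex.I * j * gco N α ε (c t) j := by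
    intro j hj
    have h1 : deriv (fun s => c s j) t + 6 * convC (c t) (Dx (c t)) j
        - ((ε ^ 2 : ℝ) : ℂ) * Dmul α (Dx (c t)) j = 0 :=
      pointwise_ode N _ (hscheme t ht) j hj
    have h2 := conv_dx_eq (hVN t) j
    simp only [Dmul, Dx] at h1
    simp only [dco, gco, wco]
    push_cast at h1 h2 ⊢
    linear_combination h1 - 3 * h2
  -- derivative components
  have hck : ∀ k : ℤ, HasDerivAt (fun s => c s k) (dco c t k) t := fun k => (hdiff k t).hasDerivAt
  have hconj : ∀ k : ℤ, HasDerivAt (fun s => (starRingEnd ℂ) (c s k))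
      ((starRingEnd ℂ) (dco c t k)) t :=
    fun k => Complex.conjCLE.toContinuousLinearMap.hasFDerivAt.comp_hasDerivAt t (hck k)
  have hre1 : ∀ k : ℤ, HasDerivAt (fun s => (c s k * (starRingEnd ℂ) (c s k)).re)
      ((dco c t k * (starRingEnd ℂ) (c t k) + c t k * (starRingEnd ℂ) (dco c t k)).re) t :=
    fun k => Complex.reCLM.hasFDerivAt.comp_hasDerivAt t ((hck k).mul (hconj k))
  have hsum1 : HasDerivAt (fun s => ∑ k ∈ SN N, wco α k * (c s k * (starRingEnd ℂ) (c s k)).re)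
      (∑ k ∈ SN N, wco α k * (dco c t k * (starRingEnd ℂ) (c t k)
        + c t k * (starRingEnd ℂ) (dco c t k)).re) t :=
    HasDerivAt.fun_sum fun k _ => (hre1 k).const_mul (wco α k)
  have hsum2' : HasDerivAt (fun s => ∑ j ∈ SN N, ∑ k ∈ SN N, c s j * c s k * c s (-j - k))
      (∑ j ∈ SN N, ∑ k ∈ SN N, ((dco c t j * c t k + c t j * dco c t k) * c t (-j - k)
        + c t j * c t k * dco c t (-j - k))) t :=
    HasDerivAt.fun_sum fun j _ => HasDerivAt.fun_sum fun k _ => ((hck j).mul (hck k)).mul (hck (-j - k))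
  have hre2 : HasDerivAt (fun s => (∑ j ∈ SN N, ∑ k ∈ SN N, c s j * c s k * c s (-j - k)).re)
      ((∑ j ∈ SN N, ∑ k ∈ SN N, ((dco c t j * c t k + c t j * dco c t k) * c t (-j - k)
        + c t j * c t k * dco c t (-j - k))).re) t :=
    Complex.reCLM.hasFDerivAt.comp_hasDerivAt t hsum2'
  have hE : HasDerivAt (fun s => 2 * Real.pi *
      (ε ^ 2 * ∑ k ∈ SN N, wco α k * (c s k * (starRingEnd ℂ) (c s k)).re
        - 2 * (∑ j ∈ SN N, ∑ k ∈ SN N, c s j * c s k * c s (-j - k)).re))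
      (2 * Real.pi * (ε ^ 2 * ∑ k ∈ SN N, wco α k * (dco c t k * (starRingEnd ℂ) (c t k)
        + c t k * (starRingEnd ℂ) (dco c t k)).re
        - 2 * (∑ j ∈ SN N, ∑ k ∈ SN N, ((dco c t j * c t k + c t j * dco c t k) * c t (-j - k)
          + c t j * c t k * dco c t (-j - k))).re)) t :=
    ((hsum1.const_mul (ε ^ 2)).sub (hre2.const_mul 2)).const_mul (2 * Real.pi)
  -- rewrite the goal into the finite-sum form
  have hfun : (fun s => 2 * Real.pi *
        (ε ^ 2 * ∑' k : ℤ, ((|k| : ℤ) : ℝ) ^ α * ‖c s k‖ ^ 2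
          - 2 * (convC (c s) (convC (c s) (c s)) 0).re))
      = (fun s => 2 * Real.pi *
        (ε ^ 2 * ∑ k ∈ SN N, wco α k * (c s k * (starRingEnd ℂ) (c s k)).re
          - 2 * (∑ j ∈ SN N, ∑ k ∈ SN N, c s j * c s k * c s (-j - k)).re)) := by
    funext s
    have hA : ∑' k : ℤ, ((|k| : ℤ) : ℝ) ^ α * ‖c s k‖ ^ 2
        = ∑ k ∈ SN N, wco α k * (c s k * (starRingEnd ℂ) (c s k)).re := by
      refine (tsum_eq_sum ?_).trans (Finset.sum_congr rfl ?_)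
      · intro k hk; rw [hsup s k hk]; simp
      · intro k _
        rw [wco]
        congr 1
        simp [Complex.mul_conj, Complex.normSq_eq_norm_sq, ← Complex.ofReal_pow]
    have hB : convC (c s) (convC (c s) (c s)) 0
        = ∑ j ∈ SN N, ∑ k ∈ SN N, c s j * c s k * c s (-j - k) := by
      rw [convC_eq_sum (hVN s) _ 0]
      refine Finset.sum_congr rfl ?_
      intro j _
      rw [convC_eq_sum (hVN s) _ (0 - j), Finset.mul_sum]
      refine Finset.sum_congr rfl ?_
      intro k _
      rw [show (0:ℤ) - j - k = -j - k from by ring]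
      ring
    rw [hA, hB]
  rw [hfun, hE.deriv]
  -- algebraic computation of the derivative value
  have hswap : ∑ j ∈ SN N, ∑ k ∈ SN N, c t j * dco c t k * c t (-j - k)
      = ∑ j ∈ SN N, ∑ k ∈ SN N, dco c t j * c t k * c t (-j - k) := by
    rw [Finset.sum_comm]
    refine Finset.sum_congr rfl fun j _ => Finset.sum_congr rfl fun k _ => ?_
    rw [show -k - j = -j - k from by ring]
    ring
  have hflip := triple_flip (N := N) (a := c t) (d := dco c t) (hsup t) hd0
  have hsplit : ∑ j ∈ SN N, ∑ k ∈ SN N, ((dco c t j * c t k + c t j * dco c t k) * c t (-j - k)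
      + c t j * c t k * dco c t (-j - k))
      = (∑ j ∈ SN N, ∑ k ∈ SN N, dco c t j * c t k * c t (-j - k))
        + (∑ j ∈ SN N, ∑ k ∈ SN N, c t j * dco c t k * c t (-j - k))
        + (∑ j ∈ SN N, ∑ k ∈ SN N, c t j * c t k * dco c t (-j - k)) := by
    rw [← Finset.sum_add_distrib, ← Finset.sum_add_distrib]
    refine Finset.sum_congr rfl fun j _ => ?_
    rw [← Finset.sum_add_distrib, ← Finset.sum_add_distrib]
    exact Finset.sum_congr rfl fun k _ => by ring
  have hP : ∑ j ∈ SN N, ∑ k ∈ SN N, dco c t j * c t k * c t (-j - k)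
      = ∑ j ∈ SN N, dco c t j * (starRingEnd ℂ) (qco N (c t) j) := by
    refine Finset.sum_congr rfl fun j _ => ?_
    rw [qco_neg (hreal t) j, Finset.mul_sum]
    exact Finset.sum_congr rfl fun k _ => by ring
  rw [hsplit, hswap, hflip, hP]
  have hresum : (∑ j ∈ SN N, dco c t j * (starRingEnd ℂ) (qco N (c t) j)).re
      = ∑ j ∈ SN N, (dco c t j * (starRingEnd ℂ) (qco N (c t) j)).re :=
    Complex.re_sum _ _
  rw [Complex.add_re, Complex.add_re, hresum]
  -- key per-mode cancellation
  have hterm : ∀ j ∈ SN N,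
      ε ^ 2 * (wco α j * (dco c t j * (starRingEnd ℂ) (c t j)
        + c t j * (starRingEnd ℂ) (dco c t j)).re)
      = 6 * (dco c t j * (starRingEnd ℂ) (qco N (c t) j)).re := by
    intro j hj
    have hkey : ε ^ 2 * (wco α j * (dco c t j * (starRingEnd ℂ) (c t j)
          + c t j * (starRingEnd ℂ) (dco c t j)).re)
        - 6 * (dco c t j * (starRingEnd ℂ) (qco N (c t) j)).re
        = (2 * (dco c t j * (starRingEnd ℂ) (gco N α ε (c t) j))).re := by
      simp only [gco, map_sub, map_mul, map_ofNat, Complex.conj_ofReal, Complex.mul_re,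
        Complex.add_re, Complex.sub_re, Complex.sub_im, Complex.add_im, Complex.mul_im,
        Complex.conj_re, Complex.conj_im, Complex.ofReal_re, Complex.ofReal_im,
        Complex.re_ofNat, Complex.im_ofNat]
      ring
    have hzero : (2 * (dco c t j * (starRingEnd ℂ) (gco N α ε (c t) j))).re = 0 := by
      rw [hode j hj, mul_assoc (Complex.I * (j:ℂ)), Complex.mul_conj]
      simp
    linarith [hkey, hzero]
  have key : ε ^ 2 * ∑ k ∈ SN N, wco α k * (dco c t k * (starRingEnd ℂ) (c t k)
      + c t k * (starRingEnd ℂ) (dco c t k)).re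
      = 6 * ∑ j ∈ SN N, (dco c t j * (starRingEnd ℂ) (qco N (c t) j)).re := by
    rw [Finset.mul_sum, Finset.mul_sum]
    exact Finset.sum_congr rfl fun j hj => hterm j hj
  rw [key]
  ring
end

section
/- Let U_ε^{n+1} ∈ V_N satisfy the Crank–Nicolson FSG step: for all φ ∈ V_N, (U_ε^{n+1}, φ) = (U_ε^n, φ) − 6Δt (U_ε^{n+1/2}(U_ε^{n+1/2})_x, φ) + ε²Δt (D^α (U_ε^{n+1/2})_x, φ), where U_ε^{n+1/2} = (U_ε^n + U_ε^{n+1})/2. Then ‖U_ε^{n+1}‖_{L²} = ‖U_ε^n‖_{L²}. -/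
open scoped BigOperators

/- ### Auxiliary lemmas -/

lemma absgt {N : ℕ} {k : ℤ} (hk : k ∉ Finset.Icc (-(N:ℤ)) N) : (N:ℤ) < |k| := by
  simp only [Finset.mem_Icc, not_and_or, not_le] at hk
  rcases abs_cases k with ⟨h,_⟩ | ⟨h,_⟩ <;> rw [h] <;> omega

lemma summVN {N : ℕ} {f : ℤ → ℂ} (hf : ∀ k : ℤ, (N : ℤ) < |k| → f k = 0) :
    Summable f :=
  summable_of_ne_finset_zero (s := Finset.Icc (-(N:ℤ)) N)
    (fun k hk => hf k (absgt hk))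

lemma summVN2 {N : ℕ} {f : ℤ × ℤ → ℂ}
    (hf : ∀ p : ℤ × ℤ, (N : ℤ) < |p.1| ∨ (N : ℤ) < |p.2| → f p = 0) :
    Summable f :=
  summable_of_ne_finset_zero (s := (Finset.Icc (-(N:ℤ)) N) ×ˢ (Finset.Icc (-(N:ℤ)) N))
    (fun p hp => by
      rw [Finset.mem_product, not_and_or] at hp
      exact hf p (hp.imp absgt absgt))

/-- Antisymmetric sums over `ℤ` vanish. -/
lemma tsum_neg_zero {f : ℤ → ℂ} (hf : ∀ k, f (-k) = - f k) : ∑' k, f k = 0 := by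
  have h1 : ∑' k : ℤ, f (-k) = ∑' k, f k := (Equiv.neg ℤ).tsum_eq f
  have h2 : ∑' k : ℤ, f (-k) = - ∑' k, f k := by
    rw [show (fun k : ℤ => f (-k)) = fun k => - f k from funext hf, tsum_neg]
  have h3 := h1.symm.trans h2
  linear_combination (h3 : _) / 2

/-- The raw (unnormalized) inner product. -/
noncomputable def SuC (a b : ℤ → ℂ) : ℂ := ∑' k : ℤ, a k * (starRingEnd ℂ) (b k)

lemma innerC_eq (a b : ℤ → ℂ) : innerC a b = 2 * Real.pi * SuC a b := rfl

lemma SuC_symm {a b : ℤ → ℂ} (ha : RealCoeffs a) (hb : RealCoeffs b) :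
    SuC a b = SuC b a := by
  unfold SuC
  rw [← (Equiv.neg ℤ).tsum_eq (fun k => a k * (starRingEnd ℂ) (b k))]
  refine tsum_congr fun k => ?_
  simp only [Equiv.neg_apply, ha k, hb k, Complex.conj_conj]
  ring

lemma SuC_add_right {N : ℕ} {a b c : ℤ → ℂ} (ha : inVN N a) :
    SuC a (fun k => (b k + c k) / 2) = (SuC a b + SuC a c) / 2 := by
  unfold SuC
  have h1 : Summable fun k => a k * (starRingEnd ℂ) (b k) * (1/2) :=
    (summVN (N := N) fun k hk => by simp [ha k hk]).mul_right _
  have h2 : Summable fun k => a k * (starRingEnd ℂ) (c k) * (1/2) :=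
    (summVN (N := N) fun k hk => by simp [ha k hk]).mul_right _
  calc ∑' k : ℤ, a k * (starRingEnd ℂ) ((b k + c k) / 2)
      = ∑' k : ℤ, (a k * (starRingEnd ℂ) (b k) * (1/2)
          + a k * (starRingEnd ℂ) (c k) * (1/2)) := by
        refine tsum_congr fun k => ?_
        rw [map_div₀, map_add]
        simp only [map_ofNat]
        ring
    _ = (∑' k : ℤ, a k * (starRingEnd ℂ) (b k) * (1/2))
          + ∑' k : ℤ, a k * (starRingEnd ℂ) (c k) * (1/2) := Summable.tsum_add h1 h2
    _ = _ := by rw [tsum_mul_right, tsum_mul_right]; ring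

lemma SuC_self (a : ℤ → ℂ) : SuC a a = ((∑' k : ℤ, ‖a k‖ ^ 2 : ℝ) : ℂ) := by
  unfold SuC
  rw [Complex.ofReal_tsum]
  refine tsum_congr fun k => ?_
  rw [Complex.mul_conj, Complex.normSq_eq_norm_sq]

/-- Swap-like involution `(k, n) ↦ (-n - k, n)` of `ℤ × ℤ`. -/
def eInv : ℤ × ℤ ≃ ℤ × ℤ where
  toFun p := (-p.2 - p.1, p.2)
  invFun p := (-p.2 - p.1, p.2)
  left_inv p := by ext <;> dsimp <;> omega
  right_inv p := by ext <;> dsimp <;> omega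

/-- The transformation `(k, n) ↦ (-n, k)` of `ℤ × ℤ`. -/
def eFlip : ℤ × ℤ ≃ ℤ × ℤ where
  toFun p := (-p.2, p.1)
  invFun p := (p.2, -p.1)
  left_inv p := by simp
  right_inv p := by simp

/-- The Crank–Nicolson fully discrete FSG step conserves the `L²` norm:
`‖U_ε^{n+1}‖ = ‖U_ε^n‖`. -/
theorem stmt12 (N : ℕ) (α ε Δt : ℝ) (hα1 : 1 ≤ α) (hα2 : α ≤ 2) (hΔt : 0 < Δt)
    (un un1 : ℤ → ℂ) (hun : inVN N un) (hun1 : inVN N un1)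
    (hrealn : RealCoeffs un) (hrealn1 : RealCoeffs un1)
    (hstep : ∀ φ : ℤ → ℂ, inVN N φ →
      innerC un1 φ = innerC un φ
        - 6 * Δt * innerC (convC (fun k => (un k + un1 k) / 2)
            (Dx (fun k => (un k + un1 k) / 2))) φ
        + ((ε ^ 2 * Δt : ℝ) : ℂ) *
            innerC (Dmul α (Dx (fun k => (un k + un1 k) / 2))) φ) :
    normL2 un1 = normL2 un := by
  set w : ℤ → ℂ := fun k => (un k + un1 k) / 2 with hw_def
  have hw : inVN N w := fun k hk => by simp [hw_def, hun k hk, hun1 k hk]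
  have hrw : RealCoeffs w := fun k => by
    simp only [hw_def, hrealn k, hrealn1 k, map_div₀, map_add, map_ofNat]
  -- the dispersive term vanishes
  have hdisp : innerC (Dmul α (Dx w)) w = 0 := by
    unfold innerC Dmul Dx
    have h0 : ∑' k : ℤ, ((((|k| : ℤ) : ℝ) ^ α : ℝ) : ℂ) * (Complex.I * (k : ℂ) * w k)
        * (starRingEnd ℂ) (w k) = 0 := by
      refine tsum_neg_zero fun k => ?_
      rw [abs_neg, hrw k, ← hrw k, hrw k, Complex.conj_conj]
      push_cast
      ring
    rw [h0, mul_zero]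
  -- the nonlinear term vanishes
  have hnl : innerC (convC w (Dx w)) w = 0 := by
    have hA : ∀ m : ℤ, convC w (Dx w) m * (starRingEnd ℂ) (w m)
        = ∑' k : ℤ, Complex.I * (((m - k : ℤ) : ℝ) : ℂ)
            * (w k * w (m - k) * w (-m)) := by
      intro m
      unfold convC Dx
      rw [← tsum_mul_right]
      refine tsum_congr fun k => ?_
      rw [← hrw m]
      push_cast
      ring
    set F : ℤ × ℤ → ℂ := fun p => Complex.I * (((p.1 - p.2 : ℤ) : ℝ) : ℂ)
        * (w p.2 * w (p.1 - p.2) * w (-p.1)) with hF_def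
    have hFzero : ∀ p : ℤ × ℤ, (N : ℤ) < |p.1| ∨ (N : ℤ) < |p.2| → F p = 0 := by
      rintro ⟨m, k⟩ (h | h)
      · have : w (-m) = 0 := hw (-m) (by rwa [abs_neg])
        simp [hF_def, this]
      · simp [hF_def, hw k h]
    have hFsumm : Summable F := summVN2 hFzero
    set P : ℤ × ℤ → ℂ := fun q => w q.1 * w (-q.2 - q.1) * w q.2 with hP_def
    have hPzero : ∀ c : ℤ × ℤ → ℂ, ∀ q : ℤ × ℤ,
        (N : ℤ) < |q.1| ∨ (N : ℤ) < |q.2| → c q * P q = 0 := by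
      rintro c ⟨k, n⟩ (h | h)
      · simp [hP_def, hw k h]
      · simp [hP_def, hw n h]
    have hG1 : Summable fun q : ℤ × ℤ => ((q.1 : ℝ) : ℂ) * P q :=
      summVN2 (hPzero _)
    have hG2 : Summable fun q : ℤ × ℤ => ((q.2 : ℝ) : ℂ) * P q :=
      summVN2 (hPzero _)
    have hG3 : Summable fun q : ℤ × ℤ => (((-q.2 - q.1 : ℤ) : ℝ) : ℂ) * P q :=
      summVN2 (hPzero _)
    -- the three coefficient sums
    have hsum_all : (∑' q : ℤ × ℤ, ((q.1 : ℝ) : ℂ) * P q)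
        + (∑' q : ℤ × ℤ, ((q.2 : ℝ) : ℂ) * P q)
        + (∑' q : ℤ × ℤ, (((-q.2 - q.1 : ℤ) : ℝ) : ℂ) * P q) = 0 := by
      rw [← Summable.tsum_add hG1 hG2, ← Summable.tsum_add (hG1.add hG2) hG3]
      have : ∀ q : ℤ × ℤ, ((q.1 : ℝ) : ℂ) * P q + ((q.2 : ℝ) : ℂ) * P q
          + (((-q.2 - q.1 : ℤ) : ℝ) : ℂ) * P q = 0 := by
        intro q; push_cast; ring
      rw [tsum_congr this, tsum_zero]
    have h12 : (∑' q : ℤ × ℤ, ((q.1 : ℝ) : ℂ) * P q)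
        = ∑' q : ℤ × ℤ, ((q.2 : ℝ) : ℂ) * P q := by
      rw [← (Equiv.prodComm ℤ ℤ).tsum_eq (fun q : ℤ × ℤ => ((q.1 : ℝ) : ℂ) * P q)]
      refine tsum_congr fun q => ?_
      simp only [Equiv.prodComm_apply, Prod.fst_swap, Prod.snd_swap, hP_def]
      rw [show -q.1 - q.2 = -q.2 - q.1 by ring]
      ring
    have h13 : (∑' q : ℤ × ℤ, ((q.1 : ℝ) : ℂ) * P q)
        = ∑' q : ℤ × ℤ, (((-q.2 - q.1 : ℤ) : ℝ) : ℂ) * P q := by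
      rw [← eInv.tsum_eq (fun q : ℤ × ℤ => ((q.1 : ℝ) : ℂ) * P q)]
      refine tsum_congr fun q => ?_
      simp only [eInv, Equiv.coe_fn_mk, hP_def]
      rw [show -q.2 - (-q.2 - q.1) = q.1 by ring]
      ring
    have hG3zero : (∑' q : ℤ × ℤ, (((-q.2 - q.1 : ℤ) : ℝ) : ℂ) * P q) = 0 := by
      linear_combination hsum_all / 3 + h12 / 3 - 2 * h13 / 3
    -- relate F to G3 via the equivalence eFlip
    have hFeq : (∑' p : ℤ × ℤ, F p)
        = ∑' q : ℤ × ℤ, Complex.I * ((((-q.2 - q.1 : ℤ) : ℝ) : ℂ) * P q) := by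
      rw [← eFlip.tsum_eq F]
      refine tsum_congr fun q => ?_
      simp only [eFlip, Equiv.coe_fn_mk, hF_def, hP_def, neg_neg]
      ring_nf
    have hFzero' : (∑' p : ℤ × ℤ, F p) = 0 := by
      rw [hFeq, tsum_mul_left, hG3zero, mul_zero]
    -- put it together
    unfold innerC
    have hmain : ∑' m : ℤ, convC w (Dx w) m * (starRingEnd ℂ) (w m) = 0 := by
      have hslice : ∀ m : ℤ, Summable fun k : ℤ => F (m, k) :=
        fun m => summVN (N := N) fun k hk => hFzero (m, k) (Or.inr hk)
      calc ∑' m : ℤ, convC w (Dx w) m * (starRingEnd ℂ) (w m)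
          = ∑' m : ℤ, ∑' k : ℤ, F (m, k) := tsum_congr hA
        _ = ∑' p : ℤ × ℤ, F p := (Summable.tsum_prod' hFsumm hslice).symm
        _ = 0 := hFzero'
    rw [hmain, mul_zero]
  -- combine: the inner products against w agree
  have hmain : innerC un1 w = innerC un w := by
    rw [hstep w hw, hdisp, hnl]
    ring
  have hpi : (2 * (Real.pi : ℂ)) ≠ 0 :=
    mul_ne_zero two_ne_zero (Complex.ofReal_ne_zero.mpr Real.pi_ne_zero)
  have hSu : SuC un1 w = SuC un w := by
    have := hmain
    rw [innerC_eq, innerC_eq] at this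
    exact mul_left_cancel₀ hpi this
  rw [hw_def, SuC_add_right hun1, SuC_add_right hun,
    SuC_symm hrealn1 hrealn] at hSu
  have hself : SuC un1 un1 = SuC un un := by linear_combination 2 * hSu
  rw [SuC_self, SuC_self] at hself
  have hreal : (∑' k : ℤ, ‖un1 k‖ ^ 2) = ∑' k : ℤ, ‖un k‖ ^ 2 :=
    Complex.ofReal_inj.mp hself
  unfold normL2
  rw [hreal]
end
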